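/- The subspace $L_\varphi^\sigma(\mu)$ of those elements of $L_\varphi(\mu)$ that vanish outside some $\sigma$-finite measurable set is a closed linear subspace of $L_\varphi(\mu)$. -/

import Mathlib

open MeasureTheory Filter Topology ENNReal

/-- An Orlicz integrand `φ : Ω × X → [0,∞]`: for a.e. `ω` the partial map `φ ω` is an
Orlicz function (even, convex, lsc, proper, vanishing continuously at the origin and
tending to `∞` at infinity), and `φ` is measurable in the sense that its composition
with any strongly measurable function is measurable. -/
structure IsOrliczIntegrand {Ω X : Type*} [MeasurableSpace Ω]
    [NormedAddCommGroup X] [NormedSpace ℝ X]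
    (μ : Measure Ω) (φ : Ω → X → ℝ≥0∞) : Prop where
  ae_even : ∀ᵐ ω ∂μ, ∀ x : X, φ ω (-x) = φ ω x
  ae_convex : ∀ᵐ ω ∂μ, ∀ x y : X, ∀ a b : ℝ, 0 ≤ a → 0 ≤ b → a + b = 1 →
    φ ω (a • x + b • y) ≤ ENNReal.ofReal a * φ ω x + ENNReal.ofReal b * φ ω y
  ae_lsc : ∀ᵐ ω ∂μ, LowerSemicontinuous (φ ω)
  ae_proper : ∀ᵐ ω ∂μ, ∃ x, φ ω x ≠ ⊤
  ae_zero : ∀ᵐ ω ∂μ, Tendsto (φ ω) (nhds 0) (nhds 0)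
  ae_coercive : ∀ᵐ ω ∂μ, Tendsto (φ ω) (Filter.comap norm Filter.atTop) (nhds ⊤)
  meas_comp : ∀ u : Ω → X, StronglyMeasurable u → Measurable fun ω => φ ω (u ω)

/-- The Orlicz modular `I_φ(u) = ∫ φ(ω, u(ω)) dμ(ω)`. -/
noncomputable def orliczModular {Ω X : Type*} [MeasurableSpace Ω]
    (μ : Measure Ω) (φ : Ω → X → ℝ≥0∞) (u : Ω → X) : ℝ≥0∞ :=
  ∫⁻ ω, φ ω (u ω) ∂μ

/-- The Luxemburg norm `‖u‖_φ = inf {α > 0 : I_φ(u/α) ≤ 1}`. -/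
noncomputable def luxNorm {Ω X : Type*} [MeasurableSpace Ω]
    [NormedAddCommGroup X] [NormedSpace ℝ X]
    (μ : Measure Ω) (φ : Ω → X → ℝ≥0∞) (u : Ω → X) : ℝ≥0∞ :=
  ⨅ a : {a : ℝ // 0 < a ∧ orliczModular μ φ (fun ω => a⁻¹ • u ω) ≤ 1},
    ENNReal.ofReal a

/-- Membership in the Orlicz space `L_φ(μ)`: strongly measurable with finite
Luxemburg norm. -/
def MemOrlicz {Ω X : Type*} [MeasurableSpace Ω]
    [NormedAddCommGroup X] [NormedSpace ℝ X]
    (μ : Measure Ω) (φ : Ω → X → ℝ≥0∞) (u : Ω → X) : Prop :=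
  StronglyMeasurable u ∧ luxNorm μ φ u < ⊤

/-- The Amemiya norm `⦀u⦀_φ = inf_{α>0} α⁻¹ (1 + I_φ(α u))`. -/
noncomputable def amemiyaNorm {Ω X : Type*} [MeasurableSpace Ω]
    [NormedAddCommGroup X] [NormedSpace ℝ X]
    (μ : Measure Ω) (φ : Ω → X → ℝ≥0∞) (u : Ω → X) : ℝ≥0∞ :=
  ⨅ a : {a : ℝ // 0 < a},
    ENNReal.ofReal (a : ℝ)⁻¹ * (1 + orliczModular μ φ (fun ω => (a : ℝ) • u ω))

/-- A function is σ-finitely concentrated if it vanishes (a.e.) outside a σ-finite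
measurable set. -/
def SigmaFiniteConc {Ω X : Type*} [MeasurableSpace Ω] [Zero X]
    (μ : MeasureTheory.Measure Ω) (u : Ω → X) : Prop :=
  ∃ S : Set Ω, MeasurableSet S ∧
    (∃ g : ℕ → Set Ω, S = ⋃ n, g n ∧ ∀ n, MeasurableSet (g n) ∧ μ (g n) < ⊤) ∧
    ∀ᵐ ω ∂μ, ω ∉ S → u ω = 0

section helpers
variable {Ω X : Type*} [MeasurableSpace Ω] [NormedAddCommGroup X] [NormedSpace ℝ X]
  {μ : Measure Ω} {φ : Ω → X → ℝ≥0∞}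

lemma aux_phi_zero (hφ : IsOrliczIntegrand μ φ) : ∀ᵐ ω ∂μ, φ ω 0 = 0 := by
  filter_upwards [hφ.ae_zero] with ω h
  exact tendsto_nhds_unique (tendsto_pure_nhds (φ ω) 0) (h.mono_left (pure_le_nhds 0))

lemma aux_lux_le {u : Ω → X} {a : ℝ} (ha : 0 < a)
    (hm : orliczModular μ φ (fun ω => a⁻¹ • u ω) ≤ 1) :
    luxNorm μ φ u ≤ ENNReal.ofReal a :=
  iInf_le (fun b : {a : ℝ // 0 < a ∧ orliczModular μ φ (fun ω => a⁻¹ • u ω) ≤ 1} =>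
    ENNReal.ofReal (b : ℝ)) ⟨a, ha, hm⟩

lemma aux_exists_adm {u : Ω → X} (h : luxNorm μ φ u < ⊤) :
    ∃ a : ℝ, 0 < a ∧ orliczModular μ φ (fun ω => a⁻¹ • u ω) ≤ 1 := by
  by_contra hc
  push_neg at hc
  have he : IsEmpty {a : ℝ // 0 < a ∧ orliczModular μ φ (fun ω => a⁻¹ • u ω) ≤ 1} :=
    ⟨fun x => absurd x.2.2 (not_le.2 (hc x.1 x.2.1))⟩
  rw [luxNorm, iInf_of_empty] at h
  exact absurd h (lt_irrefl _)

lemma aux_mod_zero (hφ : IsOrliczIntegrand μ φ) (a : ℝ) :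
    orliczModular μ φ (fun ω => a⁻¹ • (0 : Ω → X) ω) = 0 := by
  rw [orliczModular, ← lintegral_zero (μ := μ)]
  apply lintegral_congr_ae
  filter_upwards [aux_phi_zero hφ] with ω h
  simp [h]

lemma aux_zero_mem (hφ : IsOrliczIntegrand μ φ) :
    MemOrlicz μ φ (0 : Ω → X) ∧ SigmaFiniteConc μ (0 : Ω → X) := by
  constructor
  · refine ⟨stronglyMeasurable_const, ?_⟩
    refine lt_of_le_of_lt (aux_lux_le one_pos ?_) ENNReal.ofReal_lt_top
    rw [aux_mod_zero hφ]
    exact zero_le_one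
  · exact ⟨∅, MeasurableSet.empty,
      ⟨fun _ => ∅, by simp, fun n => ⟨MeasurableSet.empty, by simp⟩⟩,
      Filter.Eventually.of_forall fun ω _ => rfl⟩

end helpers
section helpers2
variable {Ω X : Type*} [MeasurableSpace Ω] [NormedAddCommGroup X] [NormedSpace ℝ X]
  {μ : Measure Ω} {φ : Ω → X → ℝ≥0∞}

lemma aux_add_mod (hφ : IsOrliczIntegrand μ φ) {u v : Ω → X}
    (hu : StronglyMeasurable u) (hv : StronglyMeasurable v) {a b : ℝ} (ha : 0 < a) (hb : 0 < b)
    (hmu : orliczModular μ φ (fun ω => a⁻¹ • u ω) ≤ 1)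
    (hmv : orliczModular μ φ (fun ω => b⁻¹ • v ω) ≤ 1) :
    orliczModular μ φ (fun ω => (a + b)⁻¹ • (u + v) ω) ≤ 1 := by
  have hab : (0:ℝ) < a + b := by linarith
  have key : ∀ᵐ ω ∂μ, φ ω ((a + b)⁻¹ • (u + v) ω) ≤
      ENNReal.ofReal (a / (a + b)) * φ ω (a⁻¹ • u ω)
        + ENNReal.ofReal (b / (a + b)) * φ ω (b⁻¹ • v ω) := by
    filter_upwards [hφ.ae_convex] with ω hc
    have h := hc (a⁻¹ • u ω) (b⁻¹ • v ω) (a / (a + b)) (b / (a + b))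
      (by positivity) (by positivity) (by field_simp)
    have heq : (a + b)⁻¹ • (u + v) ω
        = (a / (a + b)) • (a⁻¹ • u ω) + (b / (a + b)) • (b⁻¹ • v ω) := by
      rw [Pi.add_apply, smul_add, smul_smul, smul_smul]
      congr 2 <;> field_simp
    rw [heq]
    exact h
  calc orliczModular μ φ (fun ω => (a + b)⁻¹ • (u + v) ω)
      ≤ ∫⁻ ω, (ENNReal.ofReal (a / (a + b)) * φ ω (a⁻¹ • u ω)
          + ENNReal.ofReal (b / (a + b)) * φ ω (b⁻¹ • v ω)) ∂μ := lintegral_mono_ae key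
    _ = ENNReal.ofReal (a / (a + b)) * orliczModular μ φ (fun ω => a⁻¹ • u ω)
          + ENNReal.ofReal (b / (a + b)) * orliczModular μ φ (fun ω => b⁻¹ • v ω) := by
        rw [orliczModular, orliczModular,
          lintegral_add_left ((hφ.meas_comp (fun ω => a⁻¹ • u ω) (hu.const_smul a⁻¹)).const_mul _),
          lintegral_const_mul' _ _ ENNReal.ofReal_ne_top,
          lintegral_const_mul' _ _ ENNReal.ofReal_ne_top]
    _ ≤ ENNReal.ofReal (a / (a + b)) * 1 + ENNReal.ofReal (b / (a + b)) * 1 :=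
        add_le_add (mul_le_mul_right hmu _) (mul_le_mul_right hmv _)
    _ = 1 := by
        rw [mul_one, mul_one, ← ENNReal.ofReal_add (by positivity) (by positivity),
          ← add_div, div_self hab.ne']
        exact ENNReal.ofReal_one

lemma aux_smul_mod (hφ : IsOrliczIntegrand μ φ) {u : Ω → X} {c a : ℝ}
    (hc : c ≠ 0) (ha : 0 < a)
    (hm : orliczModular μ φ (fun ω => a⁻¹ • u ω) ≤ 1) :
    orliczModular μ φ (fun ω => (|c| * a)⁻¹ • (c • u) ω) ≤ 1 := by
  have hca : (0:ℝ) < |c| * a := mul_pos (abs_pos.2 hc) ha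
  have key : ∀ᵐ ω ∂μ, φ ω ((|c| * a)⁻¹ • (c • u) ω) = φ ω (a⁻¹ • u ω) := by
    filter_upwards [hφ.ae_even] with ω he
    rw [Pi.smul_apply, smul_smul]
    rcases lt_or_gt_of_ne hc with h | h
    · have : (|c| * a)⁻¹ * c = -a⁻¹ := by
        rw [abs_of_neg h]; field_simp
      rw [this, neg_smul, he]
    · have : (|c| * a)⁻¹ * c = a⁻¹ := by
        rw [abs_of_pos h]; field_simp
      rw [this]
  calc orliczModular μ φ (fun ω => (|c| * a)⁻¹ • (c • u) ω)
      = orliczModular μ φ (fun ω => a⁻¹ • u ω) := lintegral_congr_ae key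
    _ ≤ 1 := hm

end helpers2
section helpers3
variable {Ω X : Type*} [MeasurableSpace Ω] [NormedAddCommGroup X] [NormedSpace ℝ X]
  {μ : Measure Ω} {φ : Ω → X → ℝ≥0∞}

lemma aux_closed (hφ : IsOrliczIntegrand μ φ) (u : ℕ → Ω → X) (v : Ω → X)
    (hu : ∀ n, MemOrlicz μ φ (u n) ∧ SigmaFiniteConc μ (u n)) (hv : MemOrlicz μ φ v)
    (htend : Tendsto (fun n => luxNorm μ φ (u n - v)) atTop (nhds 0)) :
    SigmaFiniteConc μ v := by
  choose S hSmeas hSsig hSae using fun n => (hu n).2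
  set T := ⋃ n, S n with hT
  have hTmeas : MeasurableSet T := MeasurableSet.iUnion hSmeas
  have hTsig : ∃ g : ℕ → Set Ω, T = ⋃ n, g n ∧ ∀ n, MeasurableSet (g n) ∧ μ (g n) < ⊤ := by
    choose g hg hgm using hSsig
    refine ⟨fun k => g (Nat.unpair k).1 (Nat.unpair k).2, ?_, fun k => hgm _ _⟩
    rw [Set.iUnion_unpair]
    exact Set.iUnion_congr hg
  set w : Ω → X := Tᶜ.indicator (fun ω => -v ω) with hw
  have hwsm : StronglyMeasurable w := hv.1.neg.indicator hTmeas.compl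
  -- `luxNorm w ≤ luxNorm (u n - v)` for every n
  have hineq : ∀ n, luxNorm μ φ w ≤ luxNorm μ φ (u n - v) := by
    intro n
    refine le_iInf fun p => ?_
    obtain ⟨a, ha, hm⟩ := p
    refine le_trans (aux_lux_le ha ?_) le_rfl
    refine le_trans (lintegral_mono_ae ?_) hm
    filter_upwards [aux_phi_zero hφ, hSae n] with ω h0 hun
    by_cases hωT : ω ∈ T
    · have hwω : w ω = 0 := Set.indicator_of_notMem (by simpa using hωT) _
      simp [hwω, h0]
    · have hωn : ω ∉ S n := fun h => hωT (Set.mem_iUnion.2 ⟨n, h⟩)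
      have hwω : w ω = (u n - v) ω := by
        rw [hw, Set.indicator_of_mem (by simpa using hωT), Pi.sub_apply, hun hωn, zero_sub]
      rw [hwω]
  have hw0 : luxNorm μ φ w = 0 :=
    le_antisymm (ge_of_tendsto' htend hineq) zero_le
  -- extract a sequence of admissible scalings tending to 0
  have hseq : ∀ k : ℕ, ∃ a : ℝ, 0 < a ∧
      orliczModular μ φ (fun ω => a⁻¹ • w ω) ≤ 1 ∧ a < 1 / (k + 1) := by
    intro k
    have hlt : luxNorm μ φ w < ENNReal.ofReal (1 / (k + 1)) := by
      rw [hw0]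
      exact ENNReal.ofReal_pos.2 (by positivity)
    rw [luxNorm, iInf_lt_iff] at hlt
    obtain ⟨⟨a, ha, hm⟩, hlt⟩ := hlt
    exact ⟨a, ha, hm, (ENNReal.ofReal_lt_ofReal_iff (by positivity)).1 hlt⟩
  choose aseq hapos hamod halt using hseq
  have hinvge : ∀ k : ℕ, (k : ℝ) + 1 ≤ (aseq k)⁻¹ := by
    intro k
    have h1 : (1 / ((k : ℝ) + 1))⁻¹ < (aseq k)⁻¹ :=
      inv_strictAnti₀ (hapos k) (halt k)
    rw [one_div, inv_inv] at h1
    exact h1.le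
  have hinv : Tendsto (fun k => (aseq k)⁻¹) atTop atTop :=
    tendsto_atTop_mono hinvge
      (tendsto_atTop_add_const_right atTop 1 tendsto_natCast_atTop_atTop)
  set F : ℕ → Ω → ℝ≥0∞ := fun k ω => φ ω ((aseq k)⁻¹ • w ω) with hF
  have hFmeas : ∀ k, Measurable (F k) := fun k =>
    hφ.meas_comp (fun ω => (aseq k)⁻¹ • w ω) (hwsm.const_smul _)
  have hFatou : ∫⁻ ω, liminf (fun k => F k ω) atTop ∂μ ≤ 1 := by
    refine le_trans (lintegral_liminf_le hFmeas) ?_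
    refine le_trans (liminf_le_liminf (Filter.Eventually.of_forall fun k => hamod k)) ?_
    simp [liminf_const]
  have hfin : ∀ᵐ ω ∂μ, liminf (fun k => F k ω) atTop < ⊤ :=
    ae_lt_top (Measurable.liminf hFmeas) (ne_top_of_le_ne_top ENNReal.one_ne_top hFatou)
  have hcoer : ∀ᵐ ω ∂μ, w ω = 0 := by
    filter_upwards [hfin, hφ.ae_coercive] with ω hlt hco
    by_contra hne
    have hnorm : Tendsto (fun k => (aseq k)⁻¹ • w ω) atTop (comap norm atTop) := by
      rw [tendsto_comap_iff]
      refine (hinv.atTop_mul_const (norm_pos_iff.2 hne)).congr fun k => ?_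
      rw [Function.comp_apply, norm_smul, Real.norm_eq_abs,
        abs_of_pos (inv_pos.2 (hapos k))]
    have hlim : Tendsto (fun k => F k ω) atTop (nhds ⊤) := hco.comp hnorm
    rw [hlim.liminf_eq] at hlt
    exact absurd hlt (lt_irrefl _)
  refine ⟨T, hTmeas, hTsig, ?_⟩
  filter_upwards [hcoer] with ω h hωT
  have hwω : w ω = -v ω := Set.indicator_of_mem (Set.mem_compl hωT) _
  rw [hwω] at h
  exact neg_eq_zero.1 h

end helpers3


/-- `L_φ^σ(μ)`, the set of elements of `L_φ(μ)` vanishing outside a σ-finite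
set, is a linear subspace of `L_φ(μ)` which is closed under convergence in the
Luxemburg norm. -/
theorem sigmaFiniteConc_closed_subspace {Ω X : Type*} [MeasurableSpace Ω]
    [NormedAddCommGroup X] [NormedSpace ℝ X]
    (μ : Measure Ω) (φ : Ω → X → ℝ≥0∞) (hφ : IsOrliczIntegrand μ φ) :
    (MemOrlicz μ φ (0 : Ω → X) ∧ SigmaFiniteConc μ (0 : Ω → X)) ∧
    (∀ u v : Ω → X, MemOrlicz μ φ u ∧ SigmaFiniteConc μ u →
      MemOrlicz μ φ v ∧ SigmaFiniteConc μ v →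
      MemOrlicz μ φ (u + v) ∧ SigmaFiniteConc μ (u + v)) ∧
    (∀ (c : ℝ) (u : Ω → X), MemOrlicz μ φ u ∧ SigmaFiniteConc μ u →
      MemOrlicz μ φ (c • u) ∧ SigmaFiniteConc μ (c • u)) ∧
    (∀ (u : ℕ → Ω → X) (v : Ω → X),
      (∀ n, MemOrlicz μ φ (u n) ∧ SigmaFiniteConc μ (u n)) → MemOrlicz μ φ v →
      Tendsto (fun n => luxNorm μ φ (u n - v)) atTop (nhds 0) →
      SigmaFiniteConc μ v) := by
  refine ⟨aux_zero_mem hφ, ?_, ?_, ?_⟩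
  · rintro u v ⟨⟨hum, hufin⟩, Su, hSu, ⟨gu, hgu, hgum⟩, hau⟩
      ⟨⟨hvm, hvfin⟩, Sv, hSv, ⟨gv, hgv, hgvm⟩, hav⟩
    obtain ⟨a, ha, hma⟩ := aux_exists_adm hufin
    obtain ⟨b, hb, hmb⟩ := aux_exists_adm hvfin
    refine ⟨⟨hum.add hvm, ?_⟩, ?_⟩
    · exact lt_of_le_of_lt
        (aux_lux_le (by linarith) (aux_add_mod hφ hum hvm ha hb hma hmb))
        ENNReal.ofReal_lt_top
    · refine ⟨Su ∪ Sv, hSu.union hSv,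
        ⟨fun n => gu n ∪ gv n, ?_, fun n => ⟨(hgum n).1.union (hgvm n).1, ?_⟩⟩, ?_⟩
      · rw [hgu, hgv, Set.iUnion_union_distrib]
      · exact lt_of_le_of_lt (measure_union_le _ _)
          (ENNReal.add_lt_top.2 ⟨(hgum n).2, (hgvm n).2⟩)
      · filter_upwards [hau, hav] with ω h1 h2 hmem
        rw [Pi.add_apply, h1 (fun h => hmem (Or.inl h)),
          h2 (fun h => hmem (Or.inr h)), add_zero]
  · rintro c u ⟨⟨hum, hufin⟩, S, hS, hsig, hae⟩
    by_cases hc : c = 0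
    · subst hc
      rw [zero_smul]
      exact aux_zero_mem hφ
    · obtain ⟨a, ha, hma⟩ := aux_exists_adm hufin
      refine ⟨⟨hum.const_smul c, ?_⟩, ?_⟩
      · exact lt_of_le_of_lt
          (aux_lux_le (mul_pos (abs_pos.2 hc) ha) (aux_smul_mod hφ hc ha hma))
          ENNReal.ofReal_lt_top
      · refine ⟨S, hS, hsig, ?_⟩
        filter_upwards [hae] with ω h hmem
        rw [Pi.smul_apply, h hmem, smul_zero]
  · exact fun u v hu hv ht => aux_closed hφ u v hu hv ht
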